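/- Let M ≥ 1, η ∈ (0,1), and 0 ≤ ℓ_max ≤ M. Let L be a random variable on {0,1,…,ℓ_max} with P(L = ℓ) = Λ_ℓ, where Σ_{ℓ=0}^{ℓ_max} Λ_ℓ = 1. Given L = ℓ ≥ 1, let S be a uniformly random ℓ-element subset of {1,…,M} and X := max S; given L = 0, set X := 0. Let Y be independent of (L, S) and geometrically distributed on {1,2,…} with P(Y = y) = (1−η)^{y−1}·η. Then P(X < Y) = Σ_{y=1}^{M} η·(1−η)^{y−1} · Σ_{ℓ=0}^{ℓ_max} Λ_ℓ · (y−1)!·(M−ℓ)! / ((y−ℓ−1)!·M!) + (1−η)^M, where the summand for a pair (y, ℓ) with y ≤ ℓ is interpreted as 0. (Multiplied by the probability φ_0 that the initial battery level is 0, this expression is the PLR lower bound of Theorem 1.) -/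

import Mathlib

open MeasureTheory
open scoped ENNReal

private lemma stmt5_conv (n c : ℕ) (a g : ℝ) (hc : 0 < c) (ha : 0 ≤ a) (hg : 0 ≤ g) :
    (n : ℝ≥0∞) * (ENNReal.ofReal a * ((c : ℝ≥0∞))⁻¹ * ENNReal.ofReal g) =
      ENNReal.ofReal (a * n / c * g) := by
  have hc' : (0:ℝ) < c := by exact_mod_cast hc
  rw [show ((c:ℝ≥0∞))⁻¹ = ENNReal.ofReal ((c:ℝ)⁻¹) by
        rw [ENNReal.ofReal_inv_of_pos hc', ENNReal.ofReal_natCast],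
      show ((n:ℝ≥0∞)) = ENNReal.ofReal (n:ℝ) from (ENNReal.ofReal_natCast n).symm,
      ← ENNReal.ofReal_mul ha, ← ENNReal.ofReal_mul (mul_nonneg ha (inv_nonneg.mpr hc'.le)),
      ← ENNReal.ofReal_mul (Nat.cast_nonneg n)]
  congr 1
  field_simp

private lemma stmt5_choose_ratio {y ℓ M : ℕ} (hℓM : ℓ ≤ M) (hlt : ℓ < y) :
    ((y-1).choose ℓ : ℝ) / (M.choose ℓ : ℝ) =
      ((y - 1).factorial * (M - ℓ).factorial : ℝ) / ((y - ℓ - 1).factorial * M.factorial) := by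
  have f1 : ((y-1).choose ℓ : ℝ) * ℓ.factorial * (y-1-ℓ).factorial = (y-1).factorial := by
    exact_mod_cast Nat.choose_mul_factorial_mul_factorial (show ℓ ≤ y - 1 by omega)
  have f2 : ((M).choose ℓ : ℝ) * ℓ.factorial * (M-ℓ).factorial = M.factorial := by
    exact_mod_cast Nat.choose_mul_factorial_mul_factorial hℓM
  have hMc : (0:ℝ) < M.choose ℓ := by exact_mod_cast Nat.choose_pos hℓM
  rw [show y - ℓ - 1 = y - 1 - ℓ from by omega]
  rw [div_eq_div_iff hMc.ne' (show ((y - 1 - ℓ).factorial * M.factorial : ℝ) ≠ 0 by positivity)]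
  apply mul_left_cancel₀ (show (ℓ.factorial : ℝ) ≠ 0 by positivity)
  calc (ℓ.factorial : ℝ) * (((y-1).choose ℓ : ℝ) * ((y - 1 - ℓ).factorial * M.factorial))
      = (((y-1).choose ℓ : ℝ) * ℓ.factorial * (y-1-ℓ).factorial) * M.factorial := by ring
    _ = ((y-1).factorial : ℝ) * M.factorial := by rw [f1]
    _ = ((y-1).factorial : ℝ) * (((M).choose ℓ : ℝ) * ℓ.factorial * (M-ℓ).factorial) := by rw [f2]
    _ = (ℓ.factorial : ℝ) * (((y - 1).factorial * (M - ℓ).factorial : ℝ) * (M.choose ℓ : ℝ)) := by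
        ring

/-- a device draws a degree `L` with `P(L = ℓ) = Λ_ℓ` on `{0,…,ℓ_max}`;
given `L = ℓ ≥ 1`, `S` is a uniformly random `ℓ`-element subset of `{1,…,M}` and
`X := max S`; given `L = 0`, `X := 0`. `Y` is independent of `(L,S)` and geometric
with `P(Y = y) = (1−η)^{y−1}·η`. Then
`P(X < Y) = Σ_{y=1}^{M} η·(1−η)^{y−1}·Σ_{ℓ=0}^{ℓ_max} Λ_ℓ·(y−1)!·(M−ℓ)!/((y−ℓ−1)!·M!)
  + (1−η)^M`, where summands with `y ≤ ℓ` are interpreted as `0`. -/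
theorem stmt_5 {Ω : Type*} [MeasurableSpace Ω] (P : Measure Ω) [IsProbabilityMeasure P]
    (M ℓmax : ℕ) (hM : 1 ≤ M) (hℓmax : ℓmax ≤ M) (η : ℝ) (hη0 : 0 < η) (hη1 : η < 1)
    (Λ : ℕ → ℝ) (hΛ0 : ∀ ℓ ≤ ℓmax, 0 ≤ Λ ℓ)
    (hΛ1 : ∑ ℓ ∈ Finset.range (ℓmax + 1), Λ ℓ = 1)
    (L : Ω → ℕ) (S : Ω → Finset ℕ) (X Y : Ω → ℕ)
    (hLmeas : ∀ k : ℕ, MeasurableSet {ω | L ω = k})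
    (hLSmeas : ∀ (k : ℕ) (s : Finset ℕ), MeasurableSet {ω | L ω = k ∧ S ω = s})
    (hYmeas : ∀ k : ℕ, MeasurableSet {ω | Y ω = k})
    (hLsupp : P {ω | L ω ≤ ℓmax} = 1)
    (hLdist : ∀ ℓ ≤ ℓmax, P {ω | L ω = ℓ} = ENNReal.ofReal (Λ ℓ))
    (hScond : ∀ ℓ, 1 ≤ ℓ → ℓ ≤ ℓmax → ∀ s ∈ (Finset.Icc 1 M).powersetCard ℓ,
      P {ω | L ω = ℓ ∧ S ω = s} = P {ω | L ω = ℓ} * (M.choose ℓ : ℝ≥0∞)⁻¹)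
    (hSsupp : ∀ ℓ, 1 ≤ ℓ → ℓ ≤ ℓmax →
      P {ω | L ω = ℓ ∧ S ω ∈ (Finset.Icc 1 M).powersetCard ℓ} = P {ω | L ω = ℓ})
    (hX : ∀ ω, (L ω = 0 → X ω = 0) ∧
      (L ω ≠ 0 → X ω ∈ S ω ∧ ∀ i ∈ S ω, i ≤ X ω))
    (hY0 : P {ω | Y ω = 0} = 0)
    (hYgeom : ∀ k : ℕ, 1 ≤ k →
      P {ω | Y ω = k} = ENNReal.ofReal ((1 - η) ^ (k - 1) * η))
    (hindep : ∀ (k : ℕ) (s : Finset ℕ) (y : ℕ),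
      P ({ω | L ω = k ∧ S ω = s} ∩ {ω | Y ω = y}) =
        P {ω | L ω = k ∧ S ω = s} * P {ω | Y ω = y}) :
    P {ω | X ω < Y ω} =
      ENNReal.ofReal (∑ y ∈ Finset.Icc 1 M, η * (1 - η) ^ (y - 1) *
        ∑ ℓ ∈ Finset.range (ℓmax + 1), Λ ℓ *
          (if ℓ < y then ((y - 1).factorial * (M - ℓ).factorial : ℝ) /
            ((y - ℓ - 1).factorial * M.factorial) else 0) + (1 - η) ^ M) := by
  classical
  have hb : (0:ℝ) ≤ 1 - η := by linarith
  have hgy : ∀ y : ℕ, (0:ℝ) ≤ (1 - η) ^ (y - 1) * η := fun y => by positivity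
  -- independence of {L = k} from {Y = y}
  have hEdisj : ∀ (k : ℕ) (s : Finset ℕ) (k' : ℕ) (s' : Finset ℕ), (k ≠ k' ∨ s ≠ s') →
      Disjoint {ω | L ω = k ∧ S ω = s} {ω | L ω = k' ∧ S ω = s'} := by
    intro k s k' s' h
    rw [Set.disjoint_left]
    rintro ω ⟨h1, h2⟩ ⟨h3, h4⟩
    rcases h with h | h
    · exact h (h1.symm.trans h3)
    · exact h (h2.symm.trans h4)
  have hLunion : ∀ k : ℕ, {ω | L ω = k} = ⋃ s : Finset ℕ, {ω | L ω = k ∧ S ω = s} := by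
    intro k; ext ω; simp
  have hPL : ∀ k : ℕ, P {ω | L ω = k} = ∑' s : Finset ℕ, P {ω | L ω = k ∧ S ω = s} := by
    intro k
    rw [hLunion k]
    exact measure_iUnion (fun s s' hss => hEdisj k s k s' (Or.inr hss)) (fun s => hLSmeas k s)
  have hLY : ∀ k y : ℕ, P ({ω | L ω = k} ∩ {ω | Y ω = y}) =
      P {ω | L ω = k} * P {ω | Y ω = y} := by
    intro k y
    have h1 : {ω | L ω = k} ∩ {ω | Y ω = y} =
        ⋃ s : Finset ℕ, ({ω | L ω = k ∧ S ω = s} ∩ {ω | Y ω = y}) := by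
      rw [hLunion k, Set.iUnion_inter]
    rw [h1, measure_iUnion
        (fun s s' hss => ((hEdisj k s k s' (Or.inr hss)).mono Set.inter_subset_left
          Set.inter_subset_left))
        (fun s => (hLSmeas k s).inter (hYmeas y))]
    simp_rw [hindep k _ y]
    rw [ENNReal.tsum_mul_right, ← hPL k]
  -- null sets
  have hLlemeas : MeasurableSet {ω | L ω ≤ ℓmax} := by
    have h : {ω | L ω ≤ ℓmax} = ⋃ k ∈ Finset.range (ℓmax+1), {ω | L ω = k} := by
      ext ω
      simp only [Set.mem_setOf_eq, Set.mem_iUnion, Finset.mem_range, exists_prop]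
      constructor
      · intro h; exact ⟨L ω, by omega, rfl⟩
      · rintro ⟨k, hk, rfl⟩; omega
    rw [h]
    exact (Finset.range (ℓmax+1)).measurableSet_biUnion (fun k _ => hLmeas k)
  have hN1 : P {ω | L ω ≤ ℓmax}ᶜ = 0 := (prob_compl_eq_zero_iff hLlemeas).mpr hLsupp
  have hAin : ∀ ℓ : ℕ, {ω | L ω = ℓ ∧ S ω ∈ (Finset.Icc 1 M).powersetCard ℓ} =
      ⋃ s ∈ (Finset.Icc 1 M).powersetCard ℓ, {ω | L ω = ℓ ∧ S ω = s} := by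
    intro ℓ; ext ω
    simp only [Set.mem_setOf_eq, Set.mem_iUnion, exists_prop]
    constructor
    · rintro ⟨h1, h2⟩; exact ⟨S ω, h2, h1, rfl⟩
    · rintro ⟨s, hs, h1, rfl⟩; exact ⟨h1, hs⟩
  have hAinmeas : ∀ ℓ : ℕ,
      MeasurableSet {ω | L ω = ℓ ∧ S ω ∈ (Finset.Icc 1 M).powersetCard ℓ} := by
    intro ℓ
    rw [hAin ℓ]
    exact ((Finset.Icc 1 M).powersetCard ℓ).measurableSet_biUnion (fun s _ => hLSmeas ℓ s)
  have hN2 : ∀ ℓ ∈ Finset.Icc 1 ℓmax,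
      P ({ω | L ω = ℓ} \ {ω | L ω = ℓ ∧ S ω ∈ (Finset.Icc 1 M).powersetCard ℓ}) = 0 := by
    intro ℓ hℓ
    obtain ⟨h1, h2⟩ := Finset.mem_Icc.mp hℓ
    have key := measure_inter_add_diff (μ := P) {ω | L ω = ℓ} (hAinmeas ℓ)
    have hsub : {ω | L ω = ℓ} ∩ {ω | L ω = ℓ ∧ S ω ∈ (Finset.Icc 1 M).powersetCard ℓ} =
        {ω | L ω = ℓ ∧ S ω ∈ (Finset.Icc 1 M).powersetCard ℓ} := by
      ext ω
      simp only [Set.mem_inter_iff, Set.mem_setOf_eq]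
      tauto
    rw [hsub, hSsupp ℓ h1 h2] at key
    exact (ENNReal.add_right_inj (measure_ne_top P _)).mp (key.trans (add_zero _).symm)
  set N : Set Ω := {ω | L ω ≤ ℓmax}ᶜ ∪
      ((⋃ ℓ ∈ Finset.Icc 1 ℓmax,
        ({ω | L ω = ℓ} \ {ω | L ω = ℓ ∧ S ω ∈ (Finset.Icc 1 M).powersetCard ℓ})) ∪
       {ω | Y ω = 0}) with hNdef
  have hNnull : P N = 0 := by
    refine measure_union_null hN1 (measure_union_null ?_ hY0)
    refine le_antisymm (le_trans (measure_biUnion_finset_le _ _) ?_) zero_le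
    rw [Finset.sum_eq_zero hN2]
  have hNinfo : ∀ ω, ω ∉ N → L ω ≤ ℓmax ∧
      (∀ ℓ : ℕ, 1 ≤ ℓ → ℓ ≤ ℓmax → L ω = ℓ → S ω ∈ (Finset.Icc 1 M).powersetCard ℓ) ∧
      1 ≤ Y ω := by
    intro ω hω
    rw [hNdef] at hω
    simp only [Set.mem_union, not_or] at hω
    obtain ⟨hA, hB, hC⟩ := hω
    refine ⟨Set.notMem_compl_iff.mp hA, ?_, ?_⟩
    · intro ℓ h1 h2 hLω
      by_contra hcon
      exact hB (Set.mem_biUnion (Finset.mem_Icc.mpr ⟨h1, h2⟩) ⟨hLω, fun hmem => hcon hmem.2⟩)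
    · simp only [Set.mem_setOf_eq] at hC
      omega
  -- the Y ≤ M event
  have hYle_eq : {ω | Y ω ≤ M} = ⋃ k ∈ Finset.range (M+1), {ω | Y ω = k} := by
    ext ω
    simp only [Set.mem_setOf_eq, Set.mem_iUnion, Finset.mem_range, exists_prop]
    constructor
    · intro h; exact ⟨Y ω, by omega, rfl⟩
    · rintro ⟨k, hk, rfl⟩; omega
  have hYleM : MeasurableSet {ω | Y ω ≤ M} := by
    rw [hYle_eq]
    exact (Finset.range (M+1)).measurableSet_biUnion (fun k _ => hYmeas k)
  have hYdisj : ∀ (y y' : ℕ), y ≠ y' → Disjoint {ω | Y ω = y} {ω | Y ω = y'} := by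
    intro y y' h
    rw [Set.disjoint_left]
    rintro ω h1 h2
    exact h (h1.symm.trans h2)
  have hgeo : ∀ n : ℕ, ∑ y ∈ Finset.Icc 1 n, (1-η)^(y-1)*η = 1 - (1-η)^n := by
    intro n
    induction n with
    | zero => simp
    | succ n ih =>
      rw [Finset.sum_Icc_succ_top (by omega), ih]
      simp only [Nat.add_sub_cancel]
      rw [pow_succ]
      ring
  have hinsM : Finset.range (M+1) = insert 0 (Finset.Icc 1 M) := by
    ext k
    simp only [Finset.mem_range, Finset.mem_insert, Finset.mem_Icc]
    omega
  have hPYM : P {ω | Y ω ≤ M}ᶜ = ENNReal.ofReal ((1-η)^M) := by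
    have h1 : P {ω | Y ω ≤ M} = ∑ k ∈ Finset.range (M+1), P {ω | Y ω = k} := by
      rw [hYle_eq]
      exact measure_biUnion_finset (fun i _ j _ hij => hYdisj i j hij) (fun k _ => hYmeas k)
    have h2 : ∑ k ∈ Finset.range (M+1), P {ω | Y ω = k} =
        ENNReal.ofReal (1 - (1-η)^M) := by
      rw [hinsM, Finset.sum_insert (by simp), hY0, zero_add,
        Finset.sum_congr rfl (fun y hy => hYgeom y (Finset.mem_Icc.mp hy).1),
        ← ENNReal.ofReal_sum_of_nonneg (fun y _ => hgy y), hgeo]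
    have hple : (1-η)^M ≤ 1 := pow_le_one₀ hb (by linarith)
    rw [measure_compl hYleM (measure_ne_top _ _), measure_univ, h1, h2]
    rw [show (1:ℝ≥0∞) = ENNReal.ofReal 1 from ENNReal.ofReal_one.symm,
      ← ENNReal.ofReal_sub 1 (by linarith)]
    congr 1
    ring
  -- the good event G
  set G : Set Ω := (⋃ y ∈ Finset.Icc 1 M, ({ω | Y ω = y} ∩
      ({ω | L ω = 0} ∪ ⋃ ℓ ∈ Finset.Icc 1 ℓmax,
        ⋃ s ∈ (Finset.Icc 1 (y-1)).powersetCard ℓ, {ω | L ω = ℓ ∧ S ω = s}))) ∪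
      {ω | Y ω ≤ M}ᶜ with hGdef
  have hsetEq : {ω | X ω < Y ω} \ N = G \ N := by
    ext ω
    simp only [Set.mem_diff]
    constructor
    · rintro ⟨hxy, hn⟩
      refine ⟨?_, hn⟩
      obtain ⟨hLle, hS, hY1⟩ := hNinfo ω hn
      rw [hGdef]
      simp only [Set.mem_setOf_eq] at hxy
      by_cases hYM : Y ω ≤ M
      · left
        refine Set.mem_biUnion (Finset.mem_Icc.mpr ⟨hY1, hYM⟩) (Set.mem_inter rfl ?_)
        by_cases hL0 : L ω = 0
        · left; exact hL0
        · right
          have h1 : 1 ≤ L ω := Nat.one_le_iff_ne_zero.mpr hL0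
          have hSpc := hS (L ω) h1 hLle rfl
          obtain ⟨hXin, hXmax⟩ := (hX ω).2 hL0
          have hsub : S ω ∈ (Finset.Icc 1 (Y ω - 1)).powersetCard (L ω) := by
            rw [Finset.mem_powersetCard] at hSpc ⊢
            refine ⟨?_, hSpc.2⟩
            intro i hi
            have hi1 := hSpc.1 hi
            rw [Finset.mem_Icc] at hi1 ⊢
            have h2 := hXmax i hi
            omega
          exact Set.mem_biUnion (Finset.mem_Icc.mpr ⟨h1, hLle⟩)
            (Set.mem_biUnion hsub ⟨rfl, rfl⟩)
      · right; exact hYM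
    · rintro ⟨hg, hn⟩
      refine ⟨?_, hn⟩
      obtain ⟨hLle, hS, hY1⟩ := hNinfo ω hn
      have hXM : X ω ≤ M := by
        by_cases hL0 : L ω = 0
        · rw [(hX ω).1 hL0]; omega
        · have h1 : 1 ≤ L ω := Nat.one_le_iff_ne_zero.mpr hL0
          have hSpc := hS (L ω) h1 hLle rfl
          obtain ⟨hXin, _⟩ := (hX ω).2 hL0
          rw [Finset.mem_powersetCard] at hSpc
          have h2 := hSpc.1 hXin
          rw [Finset.mem_Icc] at h2
          exact h2.2
      rw [hGdef] at hg
      show X ω < Y ω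
      rcases hg with hg | hg
      · simp only [Set.mem_iUnion, exists_prop, Set.mem_inter_iff, Set.mem_union,
          Set.mem_setOf_eq, Finset.mem_Icc] at hg
        obtain ⟨y, ⟨hy1, hyM⟩, hYeq, hF⟩ := hg
        rcases hF with hL0 | hF
        · rw [(hX ω).1 hL0]; omega
        · obtain ⟨ℓ, hℓ, s, hs, hLω, hSω⟩ := hF
          have hne : L ω ≠ 0 := by omega
          obtain ⟨hXin, _⟩ := (hX ω).2 hne
          rw [hSω] at hXin
          rw [Finset.mem_powersetCard] at hs
          have h2 := hs.1 hXin
          rw [Finset.mem_Icc] at h2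
          omega
      · simp only [Set.mem_compl_iff, Set.mem_setOf_eq, not_le] at hg
        omega
  -- measurability of the F-parts
  have hFmeas : ∀ y : ℕ, MeasurableSet ({ω | L ω = 0} ∪ ⋃ ℓ ∈ Finset.Icc 1 ℓmax,
      ⋃ s ∈ (Finset.Icc 1 (y-1)).powersetCard ℓ, {ω | L ω = ℓ ∧ S ω = s}) := by
    intro y
    exact (hLmeas 0).union ((Finset.Icc 1 ℓmax).measurableSet_biUnion
      (fun ℓ _ => ((Finset.Icc 1 (y-1)).powersetCard ℓ).measurableSet_biUnion
        (fun s _ => hLSmeas ℓ s)))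
  -- per-y block value
  have hblock : ∀ y ∈ Finset.Icc 1 M,
      P ({ω | Y ω = y} ∩ ({ω | L ω = 0} ∪ ⋃ ℓ ∈ Finset.Icc 1 ℓmax,
        ⋃ s ∈ (Finset.Icc 1 (y-1)).powersetCard ℓ, {ω | L ω = ℓ ∧ S ω = s})) =
      ENNReal.ofReal (η * (1 - η) ^ (y - 1) *
        ∑ ℓ ∈ Finset.range (ℓmax + 1), Λ ℓ *
          (if ℓ < y then ((y - 1).factorial * (M - ℓ).factorial : ℝ) /
            ((y - ℓ - 1).factorial * M.factorial) else 0)) := by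
    intro y hy
    obtain ⟨hy1, hyM⟩ := Finset.mem_Icc.mp hy
    have hsubpc : ∀ ℓ : ℕ, (Finset.Icc 1 (y-1)).powersetCard ℓ ⊆
        (Finset.Icc 1 M).powersetCard ℓ :=
      fun ℓ => Finset.powersetCard_mono (Finset.Icc_subset_Icc le_rfl (by omega))
    rw [Set.inter_union_distrib_left]
    rw [measure_union ?hdisj ?hmeas]
    case hdisj =>
      rw [Set.disjoint_left]
      rintro ω ⟨-, hL0⟩ ⟨-, hω⟩
      simp only [Set.mem_iUnion, exists_prop, Finset.mem_Icc, Set.mem_setOf_eq] at hω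
      obtain ⟨ℓ, ⟨hℓ1, -⟩, s, -, hLω, -⟩ := hω
      simp only [Set.mem_setOf_eq] at hL0
      omega
    case hmeas =>
      exact (hYmeas y).inter ((Finset.Icc 1 ℓmax).measurableSet_biUnion
        (fun ℓ _ => ((Finset.Icc 1 (y-1)).powersetCard ℓ).measurableSet_biUnion
          (fun s _ => hLSmeas ℓ s)))
    have hpart1 : P ({ω | Y ω = y} ∩ {ω | L ω = 0}) =
        ENNReal.ofReal (Λ 0) * ENNReal.ofReal ((1-η)^(y-1)*η) := by
      rw [Set.inter_comm, hLY 0 y, hLdist 0 (Nat.zero_le _), hYgeom y hy1]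
    have hpart2 : P ({ω | Y ω = y} ∩ ⋃ ℓ ∈ Finset.Icc 1 ℓmax,
        ⋃ s ∈ (Finset.Icc 1 (y-1)).powersetCard ℓ, {ω | L ω = ℓ ∧ S ω = s}) =
        ∑ ℓ ∈ Finset.Icc 1 ℓmax,
          ENNReal.ofReal (Λ ℓ * ((y-1).choose ℓ : ℝ) / (M.choose ℓ : ℝ) * ((1-η)^(y-1)*η)) := by
      simp only [Set.inter_iUnion]
      rw [measure_biUnion_finset ?hd1 ?hm1]
      case hd1 =>
        intro i hi j hj hij
        simp only [Set.disjoint_iUnion_left, Set.disjoint_iUnion_right]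
        intro s _ s' _
        exact (hEdisj i s' j s (Or.inl hij)).mono Set.inter_subset_right
          Set.inter_subset_right
      case hm1 =>
        intro ℓ _
        exact ((Finset.Icc 1 (y-1)).powersetCard ℓ).measurableSet_biUnion
          (fun s _ => (hYmeas y).inter (hLSmeas ℓ s))
      refine Finset.sum_congr rfl ?_
      intro ℓ hℓ
      obtain ⟨hℓ1, hℓ2⟩ := Finset.mem_Icc.mp hℓ
      rw [measure_biUnion_finset ?hd2 ?hm2]
      case hd2 =>
        intro s hs s' hs' hss
        exact (hEdisj ℓ s ℓ s' (Or.inr hss)).mono Set.inter_subset_right Set.inter_subset_right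
      case hm2 =>
        intro s _
        exact (hYmeas y).inter (hLSmeas ℓ s)
      have hval : ∀ s ∈ (Finset.Icc 1 (y-1)).powersetCard ℓ,
          P ({ω | Y ω = y} ∩ {ω | L ω = ℓ ∧ S ω = s}) =
          ENNReal.ofReal (Λ ℓ) * ((M.choose ℓ : ℝ≥0∞))⁻¹ * ENNReal.ofReal ((1-η)^(y-1)*η) := by
        intro s hs
        rw [Set.inter_comm, hindep ℓ s y, hScond ℓ hℓ1 hℓ2 s (hsubpc ℓ hs),
          hLdist ℓ hℓ2, hYgeom y hy1]
      rw [Finset.sum_congr rfl hval, Finset.sum_const, Finset.card_powersetCard,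
        Nat.card_Icc]
      simp only [Nat.add_sub_cancel]
      rw [nsmul_eq_mul]
      exact stmt5_conv _ _ _ _ (Nat.choose_pos (hℓ2.trans hℓmax)) (hΛ0 ℓ hℓ2) (hgy y)
    rw [hpart1, hpart2]
    rw [← ENNReal.ofReal_mul (hΛ0 0 (Nat.zero_le _)),
      ← ENNReal.ofReal_sum_of_nonneg (fun ℓ hℓ => by
        have h1 := hΛ0 ℓ (Finset.mem_Icc.mp hℓ).2
        positivity),
      ← ENNReal.ofReal_add (by
        have h1 := hΛ0 0 (Nat.zero_le ℓmax)
        positivity) (Finset.sum_nonneg (fun ℓ hℓ => by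
        have h1 := hΛ0 ℓ (Finset.mem_Icc.mp hℓ).2
        positivity))]
    congr 1
    have hins : Finset.range (ℓmax+1) = insert 0 (Finset.Icc 1 ℓmax) := by
      ext k
      simp only [Finset.mem_range, Finset.mem_insert, Finset.mem_Icc]
      omega
    rw [hins, Finset.sum_insert (by simp)]
    have h0term : Λ 0 * (if 0 < y then ((y - 1).factorial * (M - 0).factorial : ℝ) /
        ((y - 0 - 1).factorial * M.factorial) else 0) = Λ 0 := by
      rw [if_pos (by omega)]
      simp only [Nat.sub_zero]
      rw [div_self (by positivity), mul_one]
    rw [h0term]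
    have hterm : ∀ ℓ ∈ Finset.Icc 1 ℓmax,
        Λ ℓ * ((y-1).choose ℓ : ℝ) / (M.choose ℓ : ℝ) * ((1-η)^(y-1)*η) =
        (Λ ℓ * (if ℓ < y then ((y - 1).factorial * (M - ℓ).factorial : ℝ) /
          ((y - ℓ - 1).factorial * M.factorial) else 0)) * ((1-η)^(y-1)*η) := by
      intro ℓ hℓ
      obtain ⟨hℓ1, hℓ2⟩ := Finset.mem_Icc.mp hℓ
      by_cases hlt : ℓ < y
      · rw [if_pos hlt, mul_div_assoc, stmt5_choose_ratio (hℓ2.trans hℓmax) hlt]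
      · rw [if_neg hlt, Nat.choose_eq_zero_of_lt (by omega)]
        simp
    rw [Finset.sum_congr rfl hterm, ← Finset.sum_mul]
    ring
  -- putting it together
  have hGmeasval : P G = (∑ y ∈ Finset.Icc 1 M,
      P ({ω | Y ω = y} ∩ ({ω | L ω = 0} ∪ ⋃ ℓ ∈ Finset.Icc 1 ℓmax,
        ⋃ s ∈ (Finset.Icc 1 (y-1)).powersetCard ℓ, {ω | L ω = ℓ ∧ S ω = s}))) +
      ENNReal.ofReal ((1-η)^M) := by
    rw [hGdef, measure_union ?hd3 hYleM.compl]
    case hd3 =>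
      rw [Set.disjoint_left]
      rintro ω hω
      simp only [Set.mem_iUnion, exists_prop, Set.mem_inter_iff, Set.mem_setOf_eq,
        Finset.mem_Icc] at hω
      obtain ⟨y, ⟨hy1, hyM⟩, hYeq, -⟩ := hω
      simp only [Set.mem_compl_iff, Set.mem_setOf_eq, not_le, not_lt]
      omega
    rw [hPYM, measure_biUnion_finset ?hd4 ?hm4]
    case hd4 =>
      intro i hi j hj hij
      exact (hYdisj i j hij).mono Set.inter_subset_left Set.inter_subset_left
    case hm4 =>
      intro y _
      exact (hYmeas y).inter (hFmeas y)
  calc P {ω | X ω < Y ω} = P ({ω | X ω < Y ω} \ N) := (measure_diff_null hNnull).symm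
    _ = P (G \ N) := by rw [hsetEq]
    _ = P G := measure_diff_null hNnull
    _ = _ := by
      rw [hGmeasval, Finset.sum_congr rfl hblock,
        ← ENNReal.ofReal_sum_of_nonneg ?hnn, ← ENNReal.ofReal_add ?hnn2 (by positivity)]
      case hnn =>
        intro y hy
        have hsnn : ∀ ℓ ∈ Finset.range (ℓmax+1), (0:ℝ) ≤ Λ ℓ *
            (if ℓ < y then ((y - 1).factorial * (M - ℓ).factorial : ℝ) /
              ((y - ℓ - 1).factorial * M.factorial) else 0) := by
          intro ℓ hℓ
          have h2 : ℓ < ℓmax + 1 := Finset.mem_range.mp hℓ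
          have h1 := hΛ0 ℓ (by omega : ℓ ≤ ℓmax)
          by_cases hlt : ℓ < y
          · rw [if_pos hlt]; positivity
          · rw [if_neg hlt]; simp
        have := Finset.sum_nonneg hsnn
        positivity
      case hnn2 =>
        refine Finset.sum_nonneg ?_
        intro y hy
        have hsnn : ∀ ℓ ∈ Finset.range (ℓmax+1), (0:ℝ) ≤ Λ ℓ *
            (if ℓ < y then ((y - 1).factorial * (M - ℓ).factorial : ℝ) /
              ((y - ℓ - 1).factorial * M.factorial) else 0) := by
          intro ℓ hℓ
          have h2 : ℓ < ℓmax + 1 := Finset.mem_range.mp hℓ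
          have h1 := hΛ0 ℓ (by omega : ℓ ≤ ℓmax)
          by_cases hlt : ℓ < y
          · rw [if_pos hlt]; positivity
          · rw [if_neg hlt]; simp
        have := Finset.sum_nonneg hsnn
        positivity
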